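/- Let L₁, L₂ > 0 and c₁, c₂ ∈ ℝ. Then the inequality ∫₀^{L₁}(u₁'(s)² − c₁·u₁(s)²) ds + ∫₀^{L₂}(u₂'(s)² − c₂·u₂(s)²) ds ≥ 0 holds for every pair of C¹ functions u₁, u₂ : ℝ → ℝ with uᵢ Lᵢ-periodic and ∫₀^{L₁} u₁ + ∫₀^{L₂} u₂ = 0, if and only if the three conditions c₁ ≤ 4π²/L₁², c₂ ≤ 4π²/L₂², and c₁/L₁ + c₂/L₂ ≤ 0 all hold. -/

import Mathlib

open MeasureTheory Real Set intervalIntegral AddCircle Complex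
open scoped ENNReal

noncomputable section

lemma periodic_deriv' {f : ℝ → ℝ} {L : ℝ} (hp : Function.Periodic f L) :
    Function.Periodic (deriv f) L := by
  intro x
  have h : (fun y => f (y + L)) = f := funext fun y => hp y
  calc deriv f (x + L) = deriv (fun y => f (y + L)) x := (deriv_comp_add_const f L x).symm
  _ = deriv f x := by rw [h]

lemma wirtinger {L : ℝ} (hL : 0 < L) {f : ℝ → ℝ} (hf : ContDiff ℝ 1 f)
    (hper : Function.Periodic f L) (hmean : ∫ s in (0:ℝ)..L, f s = 0) :
    (4 * π ^ 2 / L ^ 2) * ∫ s in (0:ℝ)..L, (f s)^2 ≤ ∫ s in (0:ℝ)..L, (deriv f s)^2 := by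
  haveI : Fact (0 < L) := ⟨hL⟩
  set g : ℝ → ℂ := fun x => (f x : ℂ) with hg
  set g' : ℝ → ℂ := fun x => ((deriv f x : ℝ) : ℂ) with hg'
  have hfd : ∀ x, HasDerivAt f (deriv f x) x :=
    fun x => (hf.differentiable one_ne_zero x).hasDerivAt
  have hgd : ∀ x, HasDerivAt g (g' x) x := fun x => (hfd x).ofReal_comp
  have hcf : Continuous f := hf.continuous
  have hcf' : Continuous (deriv f) := hf.continuous_deriv le_rfl
  have hcg : Continuous g := Complex.continuous_ofReal.comp hcf
  have hcg' : Continuous g' := Complex.continuous_ofReal.comp hcf'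
  have hpg : Function.Periodic g L := fun x => by simp [hg, hper x]
  have hpg' : Function.Periodic g' L := fun x => by simp [hg', periodic_deriv' hper x]
  -- lifts as continuous maps
  set G : C(AddCircle L, ℂ) := ⟨hpg.lift, hcg.quotient_liftOn' _⟩ with hG
  set G' : C(AddCircle L, ℂ) := ⟨hpg'.lift, hcg'.quotient_liftOn' _⟩ with hG'
  have hGc : ∀ x : ℝ, G (x : AddCircle L) = g x := fun x => rfl
  have hG'c : ∀ x : ℝ, G' (x : AddCircle L) = g' x := fun x => rfl
  -- Fourier coefficients as interval integrals
  have cint : ∀ n : ℤ, fourierCoeff (⇑G) n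
      = (1/L : ℝ) • ∫ x in (0:ℝ)..L, fourier (-n) (x : AddCircle L) • g x := by
    intro n
    rw [fourierCoeff_eq_intervalIntegral (⇑G) n 0, zero_add]; rfl
  have dint : ∀ n : ℤ, fourierCoeff (⇑G') n
      = (1/L : ℝ) • ∫ x in (0:ℝ)..L, fourier (-n) (x : AddCircle L) • g' x := by
    intro n
    rw [fourierCoeff_eq_intervalIntegral (⇑G') n 0, zero_add]; rfl
  -- coefficient of 0 vanishes
  have c0 : fourierCoeff (⇑G) 0 = 0 := by
    rw [cint 0]
    simp only [neg_zero, fourier_zero, one_smul, hg, one_mul]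
    rw [intervalIntegral.integral_ofReal, hmean]
    simp
  -- derivative relation
  have key : ∀ n : ℤ,
      fourierCoeff (⇑G') n = (2 * π * Complex.I * n / L) * fourierCoeff (⇑G) n := by
    intro n
    set v : ℝ → ℂ := fun x => fourier (-n) (x : AddCircle L) with hv
    set w : ℝ → ℂ := fun x => -2 * π * Complex.I * n / L * fourier (-n) (x : AddCircle L) with hw
    have hvd : ∀ x : ℝ, HasDerivAt v (w x) x := fun x => hasDerivAt_fourier_neg L n x
    have hcv : Continuous v := (map_continuous (fourier (-n))).comp (AddCircle.continuous_mk' L)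
    have hcw : Continuous w := continuous_const.mul hcv
    have parts := intervalIntegral.integral_mul_deriv_eq_deriv_mul
      (u := g) (u' := g') (v := v) (v' := w)
      (fun x _ => hgd x) (fun x _ => hvd x)
      (hcg'.intervalIntegrable 0 L) (hcw.intervalIntegrable 0 L)
    have hb : g L * v L - g 0 * v 0 = 0 := by
      have h1 : g L = g 0 := by simpa using (hpg 0)
      have h2 : v L = v 0 := by
        have : ((L : ℝ) : AddCircle L) = ((0 : ℝ) : AddCircle L) := by
          rw [AddCircle.coe_period, QuotientAddGroup.mk_zero]
        simp only [hv, this]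
      rw [h1, h2]; ring
    have e3 : ∫ x in (0:ℝ)..L, g x * w x
        = (-2 * π * Complex.I * n / L) * ∫ x in (0:ℝ)..L, g x * v x := by
      rw [← intervalIntegral.integral_const_mul]
      refine intervalIntegral.integral_congr fun x _ => ?_
      simp only [hw]; ring
    have e4 : (∫ x in (0:ℝ)..L, g' x * v x)
        = (2 * π * Complex.I * n / L) * ∫ x in (0:ℝ)..L, g x * v x := by
      rw [e3] at parts
      have hb' : g L * v L - g 0 * v 0 - (∫ x in (0:ℝ)..L, g' x * v x)
          = -(∫ x in (0:ℝ)..L, g' x * v x) := by rw [hb]; ring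
      rw [hb'] at parts
      linear_combination parts
    rw [dint n, cint n]
    have e1 : (∫ x in (0:ℝ)..L, fourier (-n) (x:AddCircle L) • g' x)
        = ∫ x in (0:ℝ)..L, g' x * v x :=
      intervalIntegral.integral_congr fun x _ => by simp only [hv, smul_eq_mul]; ring
    have e2 : (∫ x in (0:ℝ)..L, fourier (-n) (x:AddCircle L) • g x)
        = ∫ x in (0:ℝ)..L, g x * v x :=
      intervalIntegral.integral_congr fun x _ => by simp only [hv, smul_eq_mul]; ring
    rw [e1, e2, e4, mul_smul_comm]
  -- summability of squared Fourier coefficients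
  have summ : ∀ K : Lp ℂ 2 (@haarAddCircle L _),
      Summable (fun i : ℤ => ‖fourierCoeff K i‖ ^ 2) := by
    intro K
    have h1 := lp.memℓp (fourierBasis.repr K)
    rw [memℓp_gen_iff (by norm_num : 0 < (2:ℝ≥0∞).toReal)] at h1
    have h2 : (fun i : ℤ => ‖(fourierBasis.repr K) i‖ ^ (2:ℝ≥0∞).toReal)
        = fun i : ℤ => ‖fourierCoeff K i‖ ^ 2 := by
      funext i
      rw [fourierBasis_repr, show ((2:ℝ≥0∞).toReal) = ((2:ℕ):ℝ) by norm_num,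
        Real.rpow_natCast]
    rwa [h2] at h1
  -- Parseval for continuous maps
  have par : ∀ K : C(AddCircle L, ℂ),
      ∑' n : ℤ, ‖fourierCoeff (⇑K) n‖ ^ 2 = ∫ t, ‖K t‖ ^ 2 ∂(@haarAddCircle L _) := by
    intro K
    have h := tsum_sq_fourierCoeff (ContinuousMap.toLp (E := ℂ) 2 haarAddCircle ℂ K)
    simp_rw [fourierCoeff_toLp] at h
    rw [h]
    refine integral_congr_ae ?_
    filter_upwards [ContinuousMap.coeFn_toLp (p := 2) (μ := haarAddCircle) (𝕜 := ℂ) K] with t ht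
    rw [ht]
  have sG : Summable (fun n : ℤ => ‖fourierCoeff (⇑G) n‖ ^ 2) := by
    have := summ (ContinuousMap.toLp (E := ℂ) 2 haarAddCircle ℂ G)
    simpa only [fourierCoeff_toLp] using this
  have sG' : Summable (fun n : ℤ => ‖fourierCoeff (⇑G') n‖ ^ 2) := by
    have := summ (ContinuousMap.toLp (E := ℂ) 2 haarAddCircle ℂ G')
    simpa only [fourierCoeff_toLp] using this
  -- haar integral to interval integral
  have hInt : ∀ K : C(AddCircle L, ℂ),
      ∫ t, ‖K t‖ ^ 2 ∂(@haarAddCircle L _) = (1/L) * ∫ x in (0:ℝ)..L, ‖K (x:ℝ)‖ ^ 2 := by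
    intro K
    have h1 : (∫ x in (0:ℝ)..L, ‖K (x:ℝ)‖^2) = ∫ t : AddCircle L, ‖K t‖^2 ∂volume := by
      have := AddCircle.intervalIntegral_preimage L 0 (fun t : AddCircle L => ‖K t‖^2)
      rwa [zero_add] at this
    rw [h1, volume_eq_smul_haarAddCircle, MeasureTheory.integral_smul_measure, ENNReal.toReal_ofReal hL.le,
      smul_eq_mul, ← mul_assoc]
    field_simp
  have ec : ∑' n : ℤ, ‖fourierCoeff (⇑G) n‖^2 = (1/L) * ∫ x in (0:ℝ)..L, (f x)^2 := by
    rw [par G, hInt G]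
    congr 1
    refine intervalIntegral.integral_congr fun x _ => ?_
    rw [hGc x]
    simp [hg, Complex.norm_real, _root_.sq_abs]
  have ed : ∑' n : ℤ, ‖fourierCoeff (⇑G') n‖^2
      = (1/L) * ∫ x in (0:ℝ)..L, (deriv f x)^2 := by
    rw [par G', hInt G']
    congr 1
    refine intervalIntegral.integral_congr fun x _ => ?_
    rw [hG'c x]
    simp [hg', Complex.norm_real, _root_.sq_abs]
  -- termwise inequality
  have hterm : ∀ n : ℤ,
      (4*π^2/L^2) * ‖fourierCoeff (⇑G) n‖^2 ≤ ‖fourierCoeff (⇑G') n‖^2 := by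
    intro n
    rcases eq_or_ne n 0 with rfl | hn
    · have hz : (4*π^2/L^2) * ‖(0:ℂ)‖^2 = 0 := by simp
      rw [c0, hz]
      positivity
    · rw [key n, norm_mul, mul_pow]
      have hnorm : ‖(2*(π:ℂ)*Complex.I*(n:ℂ)/(L:ℂ))‖ = 2*π*|(n:ℝ)|/L := by
        rw [norm_div, norm_mul, norm_mul, norm_mul]
        simp [Complex.norm_real, abs_of_pos pi_pos, abs_of_pos hL, Complex.norm_intCast]
      rw [hnorm]
      have h1 : 1 ≤ |(n:ℝ)| := by
        have : (1:ℤ) ≤ |n| := Int.one_le_abs hn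
        calc (1:ℝ) = ((1:ℤ):ℝ) := by norm_num
        _ ≤ ((|n|:ℤ):ℝ) := by exact_mod_cast this
        _ = |(n:ℝ)| := by push_cast; ring
      have h2 : 4*π^2/L^2 ≤ (2*π*|(n:ℝ)|/L)^2 := by
        rw [div_pow, div_le_div_iff₀ (by positivity) (by positivity)]
        nlinarith [pi_pos, mul_pos hL hL, sq_nonneg (|(n:ℝ)| - 1), abs_nonneg (n:ℝ),
          mul_pos (mul_pos pi_pos pi_pos) (mul_pos hL hL)]
      exact mul_le_mul_of_nonneg_right h2 (by positivity)
  have hfinal := Summable.tsum_le_tsum hterm (sG.mul_left (4*π^2/L^2)) sG'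
  rw [tsum_mul_left, ec, ed] at hfinal
  have hL' : (0:ℝ) < 1/L := by positivity
  calc (4 * π ^ 2 / L ^ 2) * ∫ s in (0:ℝ)..L, (f s)^2
      = L * ((4*π^2/L^2) * ((1/L) * ∫ x in (0:ℝ)..L, (f x)^2)) := by field_simp
  _ ≤ L * ((1/L) * ∫ x in (0:ℝ)..L, (deriv f x)^2) := by
      exact mul_le_mul_of_nonneg_left hfinal hL.le
  _ = ∫ s in (0:ℝ)..L, (deriv f s)^2 := by field_simp

lemma circle_nec {L c : ℝ} (hL : 0 < L)
    (h : ∀ u : ℝ → ℝ, ContDiff ℝ 1 u → Function.Periodic u L →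
      (∫ s in (0:ℝ)..L, u s) = 0 →
      0 ≤ ∫ s in (0:ℝ)..L, ((deriv u s)^2 - c * (u s)^2)) :
    c ≤ 4 * π^2 / L^2 := by
  have hkpos : 0 < 2 * π / L := by positivity
  have hkL : (2 * π / L) * L = 2 * π := by field_simp
  have hmul : ∀ s : ℝ, HasDerivAt (fun y : ℝ => 2 * π / L * y) (2 * π / L) s := by
    intro s
    simpa using (hasDerivAt_id s).const_mul (2 * π / L)
  have hd : ∀ s : ℝ, HasDerivAt (fun y => Real.sin (2 * π / L * y))
      (Real.cos (2 * π / L * s) * (2 * π / L)) s :=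
    fun s => (Real.hasDerivAt_sin (2 * π / L * s)).comp s (hmul s)
  have hcd : ContDiff ℝ 1 (fun y => Real.sin (2 * π / L * y)) :=
    Real.contDiff_sin.comp (contDiff_const.mul contDiff_id)
  have hper : Function.Periodic (fun y => Real.sin (2 * π / L * y)) L := by
    intro x
    simp only
    rw [mul_add, hkL, Real.sin_add_two_pi]
  have hderiv : deriv (fun y => Real.sin (2 * π / L * y))
      = fun s => Real.cos (2 * π / L * s) * (2 * π / L) := funext fun s => (hd s).deriv
  have hmean : (∫ s in (0:ℝ)..L, Real.sin (2 * π / L * s)) = 0 := by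
    rw [intervalIntegral.integral_comp_mul_left Real.sin hkpos.ne']
    rw [mul_zero, hkL, integral_sin]
    simp [Real.cos_two_pi]
  have hcos2 : (∫ s in (0:ℝ)..L, Real.cos (2 * π / L * s) ^ 2) = π / (2 * π / L) := by
    rw [intervalIntegral.integral_comp_mul_left (fun x => Real.cos x ^ 2) hkpos.ne']
    rw [mul_zero, hkL, integral_cos_sq, Real.cos_two_pi, Real.sin_two_pi,
      Real.cos_zero, Real.sin_zero, smul_eq_mul]
    field_simp
    ring
  have hsin2 : (∫ s in (0:ℝ)..L, Real.sin (2 * π / L * s) ^ 2) = π / (2 * π / L) := by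
    rw [intervalIntegral.integral_comp_mul_left (fun x => Real.sin x ^ 2) hkpos.ne']
    rw [mul_zero, hkL, integral_sin_sq, Real.cos_two_pi, Real.sin_two_pi,
      Real.cos_zero, Real.sin_zero, smul_eq_mul]
    field_simp
    ring
  have hI := h (fun y => Real.sin (2 * π / L * y)) hcd hper hmean
  have hsplit : (∫ s in (0:ℝ)..L,
        ((deriv (fun y => Real.sin (2 * π / L * y)) s)^2
          - c * ((fun y => Real.sin (2 * π / L * y)) s)^2))
      = (2*π/L)^2 * (π / (2*π/L)) - c * (π / (2*π/L)) := by
    rw [hderiv]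
    have e : ∀ s ∈ Set.uIcc (0:ℝ) L,
        (Real.cos (2*π/L*s) * (2*π/L))^2 - c * ((fun y => Real.sin (2*π/L*y)) s)^2
        = (2*π/L)^2 * (Real.cos (2*π/L*s))^2 - c * (Real.sin (2*π/L*s))^2 := fun s _ => by
      simp only; ring
    rw [intervalIntegral.integral_congr e]
    rw [intervalIntegral.integral_sub, intervalIntegral.integral_const_mul,
      intervalIntegral.integral_const_mul, hcos2, hsin2]
    · exact (Continuous.intervalIntegrable (continuous_const.mul
        ((Real.continuous_cos.comp (continuous_const.mul continuous_id)).pow 2)) _ _)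
    · exact (Continuous.intervalIntegrable (continuous_const.mul
        ((Real.continuous_sin.comp (continuous_const.mul continuous_id)).pow 2)) _ _)
  rw [hsplit] at hI
  have hπk : 0 < π / (2*π/L) := by positivity
  have hck : c ≤ (2*π/L)^2 := by nlinarith [hπk]
  calc c ≤ (2*π/L)^2 := hck
  _ = 4*π^2/L^2 := by field_simp; ring

lemma circle_suff {L c : ℝ} (hL : 0 < L) (hc : c ≤ 4*π^2/L^2)
    {u : ℝ → ℝ} (hu : ContDiff ℝ 1 u) (hp : Function.Periodic u L) :
    -(c * (∫ s in (0:ℝ)..L, u s)^2 / L)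
      ≤ ∫ s in (0:ℝ)..L, ((deriv u s)^2 - c * (u s)^2) := by
  set I : ℝ := ∫ s in (0:ℝ)..L, u s with hI
  set m : ℝ := I / L with hm
  set v : ℝ → ℝ := fun x => u x - m with hv
  have hcu : Continuous u := hu.continuous
  have hcu' : Continuous (deriv u) := hu.continuous_deriv le_rfl
  have hvc : ContDiff ℝ 1 v := hu.sub contDiff_const
  have hpv : Function.Periodic v L := fun x => by simp only [hv, hp x]
  have hdv : deriv v = deriv u := funext fun x => deriv_sub_const m
  have hcv : Continuous v := hcu.sub continuous_const
  have hmv : (∫ s in (0:ℝ)..L, v s) = 0 := by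
    simp only [hv]
    rw [intervalIntegral.integral_sub (hcu.intervalIntegrable _ _)
      (intervalIntegrable_const), intervalIntegral.integral_const, ← hI]
    simp only [smul_eq_mul, hm]
    field_simp
    ring
  have hW := wirtinger hL hvc hpv hmv
  rw [hdv] at hW
  have hv2nn : 0 ≤ ∫ s in (0:ℝ)..L, (v s)^2 :=
    intervalIntegral.integral_nonneg hL.le (fun s _ => sq_nonneg _)
  have hu2 : (∫ s in (0:ℝ)..L, (u s)^2) = (∫ s in (0:ℝ)..L, (v s)^2) + m^2 * L := by
    have e : ∀ s ∈ Set.uIcc (0:ℝ) L, (u s)^2 = (v s)^2 + (2*m) * v s + m^2 := fun s _ => by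
      simp only [hv]; ring
    rw [intervalIntegral.integral_congr e,
      intervalIntegral.integral_add (@id (IntervalIntegrable (fun x => (v x)^2 + (2*m) * v x) volume 0 L)
          (((hcv.pow 2).add ((continuous_const.mul hcv))).intervalIntegrable _ _))
        (intervalIntegrable_const),
      intervalIntegral.integral_add (@id (IntervalIntegrable (fun x => (v x)^2) volume 0 L)
          ((hcv.pow 2).intervalIntegrable _ _))
        (@id (IntervalIntegrable (fun x => (2*m) * v x) volume 0 L)
          ((continuous_const.mul hcv).intervalIntegrable _ _)),
      intervalIntegral.integral_const_mul, hmv, intervalIntegral.integral_const]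
    simp only [smul_eq_mul, mul_zero, add_zero, sub_zero]
    ring
  have hsplit : (∫ s in (0:ℝ)..L, ((deriv u s)^2 - c * (u s)^2))
      = (∫ s in (0:ℝ)..L, (deriv u s)^2) - c * ∫ s in (0:ℝ)..L, (u s)^2 := by
    rw [intervalIntegral.integral_sub (@id (IntervalIntegrable (fun s => (deriv u s)^2) volume 0 L)
        ((hcu'.pow 2).intervalIntegrable _ _))
      (@id (IntervalIntegrable (fun s => c * (u s)^2) volume 0 L)
        ((continuous_const.mul (hcu.pow 2)).intervalIntegrable _ _)),
      intervalIntegral.integral_const_mul]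
  rw [hsplit, hu2]
  have hcv2 : c * (∫ s in (0:ℝ)..L, (v s)^2) ≤ (4*π^2/L^2) * ∫ s in (0:ℝ)..L, (v s)^2 :=
    mul_le_mul_of_nonneg_right hc hv2nn
  have hmIL : m^2 * L = I^2 / L := by rw [hm]; field_simp
  have hce : c * ((∫ s in (0:ℝ)..L, (v s)^2) + m^2*L)
      = c * (∫ s in (0:ℝ)..L, (v s)^2) + c*I^2/L := by
    rw [hmIL]; ring
  linarith [hW, hcv2, hce]

end


/-- Analytic content of Lemma 1.7: the index form of two circles of revolution
of lengths `L₁, L₂` with potentials `c₁, c₂` is nonnegative on all pairs of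
periodic `C¹` functions with total mean zero iff each circle is stable
(`cᵢ ≤ 4π²/Lᵢ²`) and `c₁/L₁ + c₂/L₂ ≤ 0`. -/
theorem stmt_7 (L₁ L₂ : ℝ) (hL₁ : 0 < L₁) (hL₂ : 0 < L₂) (c₁ c₂ : ℝ) :
    (∀ u₁ u₂ : ℝ → ℝ, ContDiff ℝ 1 u₁ → ContDiff ℝ 1 u₂ →
      Function.Periodic u₁ L₁ → Function.Periodic u₂ L₂ →
      (∫ s in (0:ℝ)..L₁, u₁ s) + (∫ s in (0:ℝ)..L₂, u₂ s) = 0 →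
      0 ≤ (∫ s in (0:ℝ)..L₁, ((deriv u₁ s) ^ 2 - c₁ * (u₁ s) ^ 2)) +
          (∫ s in (0:ℝ)..L₂, ((deriv u₂ s) ^ 2 - c₂ * (u₂ s) ^ 2))) ↔
    (c₁ ≤ 4 * Real.pi ^ 2 / L₁ ^ 2 ∧ c₂ ≤ 4 * Real.pi ^ 2 / L₂ ^ 2 ∧
      c₁ / L₁ + c₂ / L₂ ≤ 0) := by

  constructor
  · intro H
    refine ⟨?_, ?_, ?_⟩
    · apply circle_nec hL₁
      intro u hcd hper hmean
      have := H u (fun _ => 0) hcd contDiff_const hper (fun _ => rfl) (by simp [hmean])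
      simpa using this
    · apply circle_nec hL₂
      intro u hcd hper hmean
      have := H (fun _ => 0) u contDiff_const hcd (fun _ => rfl) hper (by simp [hmean])
      simpa using this
    · have hmn : (∫ s in (0:ℝ)..L₁, (fun _ : ℝ => L₂) s)
          + (∫ s in (0:ℝ)..L₂, (fun _ : ℝ => -L₁) s) = 0 := by
        simp [intervalIntegral.integral_const, smul_eq_mul]; ring
      have hcon := H (fun _ => L₂) (fun _ => -L₁) contDiff_const contDiff_const
        (fun _ => rfl) (fun _ => rfl) hmn
      have e₁ : (∫ s in (0:ℝ)..L₁,
            ((deriv (fun _ : ℝ => L₂) s)^2 - c₁*((fun _ : ℝ => L₂) s)^2))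
          = L₁ * (0 - c₁*L₂^2) := by
        have e : ∀ s ∈ Set.uIcc (0:ℝ) L₁,
            ((deriv (fun _ : ℝ => L₂) s)^2 - c₁*((fun _ : ℝ => L₂) s)^2)
            = 0 - c₁*L₂^2 := fun s _ => by
          rw [deriv_const]; norm_num
        rw [intervalIntegral.integral_congr e, intervalIntegral.integral_const,
          smul_eq_mul, sub_zero]
      have e₂ : (∫ s in (0:ℝ)..L₂,
            ((deriv (fun _ : ℝ => -L₁) s)^2 - c₂*((fun _ : ℝ => -L₁) s)^2))
          = L₂ * (0 - c₂*L₁^2) := by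
        have e : ∀ s ∈ Set.uIcc (0:ℝ) L₂,
            ((deriv (fun _ : ℝ => -L₁) s)^2 - c₂*((fun _ : ℝ => -L₁) s)^2)
            = 0 - c₂*L₁^2 := fun s _ => by
          rw [deriv_const]; norm_num
        rw [intervalIntegral.integral_congr e, intervalIntegral.integral_const,
          smul_eq_mul, sub_zero]
      rw [e₁, e₂] at hcon
      have key : c₁ * L₂ + c₂ * L₁ ≤ 0 := by nlinarith [hcon, mul_pos hL₁ hL₂]
      rw [div_add_div _ _ hL₁.ne' hL₂.ne']
      apply div_nonpos_of_nonpos_of_nonneg (by linarith) (mul_pos hL₁ hL₂).le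
  · rintro ⟨h₁, h₂, h₃⟩ u₁ u₂ hc₁ hc₂ hp₁ hp₂ hmean
    have b₁ := circle_suff hL₁ h₁ hc₁ hp₁
    have b₂ := circle_suff hL₂ h₂ hc₂ hp₂
    set I₁ : ℝ := ∫ s in (0:ℝ)..L₁, u₁ s with hI₁
    set I₂ : ℝ := ∫ s in (0:ℝ)..L₂, u₂ s with hI₂
    have hI2 : I₂ = -I₁ := by linarith
    have hsum : c₁ * I₁^2 / L₁ + c₂ * I₂^2 / L₂ ≤ 0 := by
      rw [hI2]
      have e : c₁ * I₁^2/L₁ + c₂*(-I₁)^2/L₂ = I₁^2 * (c₁/L₁ + c₂/L₂) := by ring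
      rw [e]
      exact mul_nonpos_of_nonneg_of_nonpos (sq_nonneg I₁) h₃
    linarith [b₁, b₂, hsum]
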